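/- If σ ∈ DP(N), written σ = (i_1,j_1)(i_2,j_2)…(i_n,j_n) with i_1 < i_2 < … < i_n and i_t < j_t for all t, then j_p < j_t whenever p < t; that is, j_1 < j_2 < … < j_n (equivalently, no two transpositions of σ are nested, so no move of type III can be applied to σ). -/

import Mathlib

open Finset in
/-- Melnikov's formula for the dimension of the Borel orbit of the strictly
upper triangular square-zero partial permutation matrix corresponding to the
involution `(a 1, b 1)(a 2, b 2)…(a s, b s)` of `{1, …, N}`:
`D_N = N·s + Σ_t (a t - b t) - Σ_t f_t`, where
`f_t = #{p < t : b p < b t} + #{p < t : b p < a t}`. -/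
def melnikovDim (N : ℕ) {s : ℕ} (a b : Fin s → ℕ) : ℤ :=
  (N : ℤ) * s + ∑ t, ((a t : ℤ) - (b t : ℤ)) -
    ∑ t : Fin s,
      (((univ.filter fun p : Fin s => p < t ∧ b p < b t).card : ℤ) +
        ((univ.filter fun p : Fin s => p < t ∧ b p < a t).card : ℤ))

open Finset in
/-- Counting values of `a` and `b` satisfying a predicate, when `a, b` jointly
cover `{1, …, N}` injectively. -/
lemma count_cover_aux {n N : ℕ} {a b : Fin (n + 1) → ℕ}
    (hinj : Function.Injective (Sum.elim a b))
    (hrange : Set.range (Sum.elim a b) = Set.Icc 1 N)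
    (P : ℕ → Prop) [DecidablePred P] :
    (univ.filter fun t => P (a t)).card + (univ.filter fun t => P (b t)).card
      = ((Finset.Icc 1 N).filter fun x => P x).card := by
  classical
  have h1 : (univ.filter fun s : Fin (n + 1) ⊕ Fin (n + 1) => P (Sum.elim a b s)).card
      = (univ.filter fun t => P (a t)).card + (univ.filter fun t => P (b t)).card := by
    rw [Finset.card_filter, Finset.card_filter, Finset.card_filter, Fintype.sum_sum_type]
    simp only [Sum.elim_inl, Sum.elim_inr]
    congr 1 <;> exact Finset.sum_congr rfl fun i _ => by split_ifs <;> rfl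
  rw [← h1]
  apply Finset.card_bij (fun s _ => Sum.elim a b s)
  · intro s hs
    simp only [mem_filter, mem_univ, true_and] at hs ⊢
    have hmem : Sum.elim a b s ∈ Set.Icc 1 N := by
      rw [← hrange]; exact ⟨s, rfl⟩
    exact ⟨Finset.mem_Icc.2 ⟨hmem.1, hmem.2⟩, hs⟩
  · intro s₁ _ s₂ _ h; exact hinj h
  · intro x hx
    simp only [mem_filter, Finset.mem_Icc] at hx
    have : x ∈ Set.range (Sum.elim a b) := by
      rw [hrange]; exact ⟨hx.1.1, hx.1.2⟩
    obtain ⟨s, hs⟩ := this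
    exact ⟨s, by simp only [mem_filter, mem_univ, true_and, hs]; exact hx.2, hs⟩

open Finset in
/-- Splitting the counting filter over `Fin (n+1)` into the contribution of the
removed index `q` and the rest, reindexed via `q.succAbove`. -/
lemma card_filter_split {n : ℕ} (q : Fin (n + 1)) (t : Fin n) (b : Fin (n + 1) → ℕ)
    (c : ℕ) :
    (univ.filter fun p : Fin (n + 1) => p < q.succAbove t ∧ b p < c).card
      = (if q < q.succAbove t ∧ b q < c then 1 else 0)
        + (univ.filter fun p : Fin n => p < t ∧ b (q.succAbove p) < c).card := by
  classical
  rw [Finset.card_filter, Finset.card_filter,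
    Fin.sum_univ_succAbove (fun p => if p < q.succAbove t ∧ b p < c then 1 else 0) q]
  congr 1
  exact Finset.sum_congr rfl fun i _ => by
    simp [Fin.succAbove_lt_succAbove_iff]

open Finset in
theorem strictMono_of_mem_DP
    (n N : ℕ) (hN : N = 2 * (n + 1))
    (a b : Fin (n + 1) → ℕ)
    (ha : StrictMono a)
    (hab : ∀ t, a t < b t)
    (hinj : Function.Injective (Sum.elim a b))
    (hrange : Set.range (Sum.elim a b) = Set.Icc 1 N)
    (hDP : ∀ q : Fin (n + 1),
      melnikovDim N (a ∘ q.succAbove) (b ∘ q.succAbove) = melnikovDim N a b - 1) :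
    StrictMono b := by
  classical
  have hbinj : ∀ p t : Fin (n + 1), b p = b t → p = t := by
    intro p t h
    have h2 : Sum.elim a b (Sum.inr p) = Sum.elim a b (Sum.inr t) := by simpa using h
    simpa using hinj h2
  have hmemb : ∀ t : Fin (n + 1), 1 ≤ b t ∧ b t ≤ N := by
    intro t
    have : b t ∈ Set.Icc 1 N := by
      rw [← hrange]; exact ⟨Sum.inr t, rfl⟩
    exact this
  have hmema : ∀ t : Fin (n + 1), 1 ≤ a t ∧ a t ≤ N := by
    intro t
    have : a t ∈ Set.Icc 1 N := by
      rw [← hrange]; exact ⟨Sum.inl t, rfl⟩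
    exact this
  -- The key claim: for each `q` there is no `p < q` with `b q < b p`.
  have key : ∀ q : Fin (n + 1),
      (univ.filter fun p : Fin (n + 1) => p < q ∧ b q < b p).card = 0 := by
    intro q
    set G : Fin (n + 1) → ℤ := fun t =>
      ((univ.filter fun p : Fin (n + 1) => p < t ∧ b p < b t).card : ℤ) +
        ((univ.filter fun p : Fin (n + 1) => p < t ∧ b p < a t).card : ℤ) with hG
    set H : Fin (n + 1) → ℤ := fun t =>
      (if q < t ∧ b q < b t then (1 : ℤ) else 0) +
        (if q < t ∧ b q < a t then (1 : ℤ) else 0) with hH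
    -- rewrite the hypothesis for this `q`
    have hq := hDP q
    simp only [melnikovDim, Function.comp_apply] at hq
    have e1 : ∑ t : Fin n, ((a (q.succAbove t) : ℤ) - (b (q.succAbove t) : ℤ))
        = ∑ t : Fin (n + 1), ((a t : ℤ) - (b t : ℤ)) - ((a q : ℤ) - (b q : ℤ)) := by
      rw [Fin.sum_univ_succAbove (fun t => ((a t : ℤ) - (b t : ℤ))) q]; ring
    have e2 : ∑ t : Fin n,
        (((univ.filter fun p : Fin n =>
            p < t ∧ b (q.succAbove p) < b (q.succAbove t)).card : ℤ) +
          ((univ.filter fun p : Fin n =>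
            p < t ∧ b (q.succAbove p) < a (q.succAbove t)).card : ℤ))
        = ∑ t : Fin (n + 1), G t - ∑ t : Fin (n + 1), H t - G q := by
      have step : ∀ t : Fin n,
          (((univ.filter fun p : Fin n =>
              p < t ∧ b (q.succAbove p) < b (q.succAbove t)).card : ℤ) +
            ((univ.filter fun p : Fin n =>
              p < t ∧ b (q.succAbove p) < a (q.succAbove t)).card : ℤ))
          = G (q.succAbove t) - H (q.succAbove t) := by
        intro t
        have h1 := card_filter_split q t b (b (q.succAbove t))
        have h2 := card_filter_split q t b (a (q.succAbove t))
        have h1' : ((univ.filter fun p : Fin (n + 1) =>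
            p < q.succAbove t ∧ b p < b (q.succAbove t)).card : ℤ)
            = (if q < q.succAbove t ∧ b q < b (q.succAbove t) then (1 : ℤ) else 0)
              + ((univ.filter fun p : Fin n =>
                  p < t ∧ b (q.succAbove p) < b (q.succAbove t)).card : ℤ) := by
          rw [h1]; push_cast; ring
        have h2' : ((univ.filter fun p : Fin (n + 1) =>
            p < q.succAbove t ∧ b p < a (q.succAbove t)).card : ℤ)
            = (if q < q.succAbove t ∧ b q < a (q.succAbove t) then (1 : ℤ) else 0)
              + ((univ.filter fun p : Fin n =>
                  p < t ∧ b (q.succAbove p) < a (q.succAbove t)).card : ℤ) := by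
          rw [h2]; push_cast; ring
        simp only [hG, hH]
        linarith
      rw [Finset.sum_congr rfl fun t _ => step t, Finset.sum_sub_distrib,
        Fin.sum_univ_succAbove G q, Fin.sum_univ_succAbove H q]
      have hHq : H q = 0 := by simp [hH]
      rw [hHq]; ring
    rw [e1, e2] at hq
    -- the main equation for this `q`
    have hmain : G q + ∑ t : Fin (n + 1), H t
        = (N : ℤ) + (a q : ℤ) - (b q : ℤ) - 1 := by
      push_cast at hq ⊢
      linarith
    -- express `∑ H` by two counts
    have hsumH : ∑ t : Fin (n + 1), H t
        = ((univ.filter fun t : Fin (n + 1) => q < t ∧ b q < b t).card : ℤ)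
          + ((univ.filter fun t : Fin (n + 1) => q < t ∧ b q < a t).card : ℤ) := by
      simp only [hH, Finset.sum_add_distrib, Finset.sum_boole]
    rw [hsumH] at hmain
    -- abbreviations for the relevant counts
    set c1 := (univ.filter fun p : Fin (n + 1) => p < q ∧ b p < b q).card with hc1
    set X := (univ.filter fun p : Fin (n + 1) => p < q ∧ b q < b p).card with hX
    set c2 := (univ.filter fun p : Fin (n + 1) => p < q ∧ b p < a q).card with hc2
    set T1 := (univ.filter fun t : Fin (n + 1) => q < t ∧ b q < b t).card with hT1
    set T2 := (univ.filter fun t : Fin (n + 1) => q < t ∧ b q < a t).card with hT2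
    -- fact 1 : c1 + X = q
    have f1 : c1 + X = (q : ℕ) := by
      have hpart := Finset.card_filter_add_card_filter_not
        (s := univ.filter fun p : Fin (n + 1) => p < q) (p := fun p => b p < b q)
      rw [Finset.filter_filter, Finset.filter_filter] at hpart
      have hneg : (univ.filter fun p : Fin (n + 1) => p < q ∧ ¬ b p < b q)
          = univ.filter fun p : Fin (n + 1) => p < q ∧ b q < b p := by
        apply Finset.filter_congr
        intro p _
        constructor
        · rintro ⟨hp, hnb⟩
          refine ⟨hp, lt_of_le_of_ne (not_lt.1 hnb) ?_⟩
          intro hbe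
          exact absurd (hbinj p q hbe.symm) hp.ne
        · rintro ⟨hp, hb⟩
          exact ⟨hp, not_lt.2 hb.le⟩
      rw [hneg] at hpart
      have hcard : (univ.filter fun p : Fin (n + 1) => p < q).card = (q : ℕ) := by
        have : (univ.filter fun p : Fin (n + 1) => p < q) = Finset.Iio q := by
          ext p; simp
        rw [this, Fin.card_Iio]
      rw [hcard] at hpart
      exact hpart
    -- fact 2 : c2 counts all p with b p < a q
    have f2 : c2 = (univ.filter fun p : Fin (n + 1) => b p < a q).card := by
      rw [hc2]
      congr 1
      apply Finset.filter_congr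
      intro p _
      constructor
      · rintro ⟨_, h⟩; exact h
      · intro h
        refine ⟨?_, h⟩
        by_contra hle
        have : a q ≤ a p := ha.monotone (not_lt.1 hle)
        have := hab p
        omega
    -- fact 3 : q + Y + 1 = a q
    have f3 : (q : ℕ) + (univ.filter fun p : Fin (n + 1) => b p < a q).card + 1 = a q := by
      have hc := count_cover_aux hinj hrange (fun x => x < a q)
      have haleft : (univ.filter fun t : Fin (n + 1) => a t < a q).card = (q : ℕ) := by
        have : (univ.filter fun t : Fin (n + 1) => a t < a q) = Finset.Iio q := by
          ext p; simp [ha.lt_iff_lt]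
        rw [this, Fin.card_Iio]
      have hright : ((Finset.Icc 1 N).filter fun x => x < a q) = Finset.Ico 1 (a q) := by
        ext x
        simp only [mem_filter, Finset.mem_Icc, Finset.mem_Ico]
        have := (hmema q).2
        omega
      rw [haleft, hright, Nat.card_Ico] at hc
      have := (hmema q).1
      omega
    -- fact 4 : T2 + (T1 + X) + b q = N
    have f4 : T2 + (T1 + X) + b q = N := by
      have hc := count_cover_aux hinj hrange (fun x => b q < x)
      have hleft : (univ.filter fun t : Fin (n + 1) => b q < a t).card = T2 := by
        rw [hT2]
        congr 1
        apply Finset.filter_congr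
        intro t _
        constructor
        · intro h
          refine ⟨?_, h⟩
          by_contra hle
          have : a t ≤ a q := ha.monotone (not_lt.1 hle)
          have := hab q
          omega
        · rintro ⟨_, h⟩; exact h
      have hmid : (univ.filter fun t : Fin (n + 1) => b q < b t).card = T1 + X := by
        have hpart := Finset.card_filter_add_card_filter_not
          (s := univ.filter fun t : Fin (n + 1) => b q < b t) (p := fun t => q < t)
        rw [Finset.filter_filter, Finset.filter_filter] at hpart
        have hA : (univ.filter fun t : Fin (n + 1) => b q < b t ∧ q < t)
            = univ.filter fun t : Fin (n + 1) => q < t ∧ b q < b t := by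
          apply Finset.filter_congr; intro t _; exact and_comm
        have hB : (univ.filter fun t : Fin (n + 1) => b q < b t ∧ ¬ q < t)
            = univ.filter fun t : Fin (n + 1) => t < q ∧ b q < b t := by
          apply Finset.filter_congr
          intro t _
          constructor
          · rintro ⟨hb, hnq⟩
            refine ⟨lt_of_le_of_ne (not_lt.1 hnq) ?_, hb⟩
            intro he
            rw [he] at hb
            omega
          · rintro ⟨ht, hb⟩
            exact ⟨hb, not_lt.2 ht.le⟩
        rw [hA, hB] at hpart
        omega
      have hright : ((Finset.Icc 1 N).filter fun x => b q < x)
          = Finset.Icc (b q + 1) N := by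
        ext x
        simp only [mem_filter, Finset.mem_Icc]
        omega
      rw [hleft, hmid, hright, Nat.card_Icc] at hc
      have := (hmemb q).2
      omega
    -- combine everything with `omega`
    have hGq : G q = (c1 : ℤ) + (c2 : ℤ) := rfl
    rw [hGq] at hmain
    have hmain' : (c1 : ℤ) + c2 + T1 + T2 = (N : ℤ) + (a q : ℤ) - (b q : ℤ) - 1 := by
      linarith
    rw [f2] at hmain'
    omega
  -- conclude strict monotonicity
  intro p t hpt
  have hk := key t
  rw [Finset.card_eq_zero, Finset.filter_eq_empty_iff] at hk
  have h1 : ¬ (p < t ∧ b t < b p) := hk (Finset.mem_univ p)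
  have h2 : b p ≠ b t := fun e => absurd (hbinj p t e) hpt.ne
  have h3 : ¬ b t < b p := fun hb => h1 ⟨hpt, hb⟩
  omega
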